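/- Let N ≥ 2 be an integer, l > 0, and k₁,…,k_N ∈ (0,l), with indices understood cyclically modulo N (index 0 means N, index −1 means N−1, etc.). Set 𝒩 := (Π_{i=1}^N k_i)/l^N and, for each i ∈ {1,…,N}, 𝓜_i := 1 + Σ_{m=1}^{i} (Π_{r=0}^{m−1} k_{i−r})/l^m + Σ_{m=i+1}^{N−1} (Π_{r=0}^{i−1} k_{i−r})(Π_{s=0}^{m−i−1} k_{N−s})/l^m. Suppose a₁,…,a_N ≥ 0 and c ≥ 0 satisfy a_i ≤ c + (k_i/l) a_{i−1} for every i (with a₀ := a_N). Then 𝒩 < 1 and for every i, a_i ≤ 𝓜_i c + 𝒩 a_i, and consequently a_i ≤ 𝓒_i c where 𝓒_i := 𝓜_i/(1−𝒩). -/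

import Mathlib

private lemma windowProd (N : ℕ) (hN : 1 ≤ N) (k : ℤ → ℝ) (hk_per : ∀ i : ℤ, k (i + N) = k i) :
    ∀ i : ℤ, ∏ j ∈ Finset.Icc (i - N + 1) i, k j = ∏ j ∈ Finset.Icc 1 (N : ℤ), k j := by
  set g : ℤ → ℝ := fun i => ∏ j ∈ Finset.Icc (i - N + 1) i, k j with hg
  have step : ∀ i : ℤ, g (i + 1) = g i := by
    intro i
    have h1 : Finset.Icc (i + 1 - N + 1) (i + 1) = insert (i + 1) (Finset.Icc (i - N + 2) i) := by
      ext x; simp only [Finset.mem_Icc, Finset.mem_insert]; omega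
    have h2 : Finset.Icc (i - N + 1) i = insert (i - N + 1) (Finset.Icc (i - N + 2) i) := by
      ext x; simp only [Finset.mem_Icc, Finset.mem_insert]; omega
    have hNk : k (i + 1) = k (i - N + 1) := by
      have := hk_per (i - N + 1)
      rw [← this]; ring_nf
    simp only [hg, h1, h2]
    rw [Finset.prod_insert (by simp [Finset.mem_Icc]),
      Finset.prod_insert (by simp only [Finset.mem_Icc]; omega), hNk]
  have const : ∀ i : ℤ, g i = g 0 := by
    intro i
    induction i using Int.induction_on with
    | zero => rfl
    | succ n ih => rw [step n, ih]
    | pred n ih =>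
      have h := step (-(n:ℤ) - 1)
      rw [show -(n:ℤ) - 1 + 1 = -(n:ℤ) by ring] at h
      rw [← h, ih]
  intro i
  have hb : g (N : ℤ) = ∏ j ∈ Finset.Icc 1 (N : ℤ), k j := by
    simp only [hg]; norm_num
  rw [show (∏ j ∈ Finset.Icc (i - N + 1) i, k j) = g i from rfl, const i, ← const (N : ℤ), hb]

private lemma sumIcoSplit (a b c : ℤ) (hab : a ≤ b) (hbc : b ≤ c) (f : ℤ → ℝ) :
    ∑ x ∈ Finset.Ico a c, f x = (∑ x ∈ Finset.Ico a b, f x) + ∑ x ∈ Finset.Ico b c, f x := by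
  rw [← Finset.sum_union]
  · congr 1; ext x; simp only [Finset.mem_Ico, Finset.mem_union]; omega
  · simp only [Finset.disjoint_left, Finset.mem_Ico]; omega

private lemma prodIcoSplit (a b c : ℤ) (hab : a ≤ b) (hbc : b ≤ c) (f : ℤ → ℝ) :
    ∏ x ∈ Finset.Ico a c, f x = (∏ x ∈ Finset.Ico a b, f x) * ∏ x ∈ Finset.Ico b c, f x := by
  rw [← Finset.prod_union]
  · congr 1; ext x; simp only [Finset.mem_Ico, Finset.mem_union]; omega
  · simp only [Finset.disjoint_left, Finset.mem_Ico]; omega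



/-- `𝒩 := (∏_{i=1}^N k_i)/l^N`. -/
noncomputable def calN (N : ℕ) (l : ℝ) (k : ℤ → ℝ) : ℝ :=
  (∏ i ∈ Finset.Icc (1:ℤ) (N:ℤ), k i) / l ^ N

/-- `𝓜_i := 1 + Σ_{m=1}^{i} (Π_{r=0}^{m−1} k_{i−r})/l^m
  + Σ_{m=i+1}^{N−1} (Π_{r=0}^{i−1} k_{i−r})(Π_{s=0}^{m−i−1} k_{N−s})/l^m`. -/
noncomputable def calM (N : ℕ) (l : ℝ) (k : ℤ → ℝ) (i : ℤ) : ℝ :=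
  1 + (∑ m ∈ Finset.Icc (1:ℤ) i, (∏ r ∈ Finset.Icc (0:ℤ) (m - 1), k (i - r)) / l ^ m)
    + (∑ m ∈ Finset.Icc (i + 1) ((N:ℤ) - 1),
        ((∏ r ∈ Finset.Icc (0:ℤ) (i - 1), k (i - r)) *
          (∏ s ∈ Finset.Icc (0:ℤ) (m - i - 1), k ((N:ℤ) - s))) / l ^ m)

/-- The cyclic recursion lemma: if `a_i ≤ c + (k_i/l) a_{i−1}` around the directed cycle
of `N` agents (indices cyclic modulo `N`), then `𝒩 < 1`, `a_i ≤ 𝓜_i c + 𝒩 a_i`, and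
`a_i ≤ 𝓒_i c` with `𝓒_i = 𝓜_i/(1−𝒩)`. -/
theorem stmt12 (N : ℕ) (hN : 2 ≤ N) (l : ℝ) (hl : 0 < l) (k : ℤ → ℝ)
    (hk_per : ∀ i : ℤ, k (i + N) = k i) (hk : ∀ i : ℤ, k i ∈ Set.Ioo 0 l)
    (a : ℤ → ℝ) (ha_per : ∀ i : ℤ, a (i + N) = a i) (ha : ∀ i : ℤ, 0 ≤ a i)
    (c : ℝ) (hc : 0 ≤ c) (hrec : ∀ i : ℤ, a i ≤ c + (k i / l) * a (i - 1)) :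
    calN N l k < 1 ∧
      ∀ i ∈ Finset.Icc (1:ℤ) (N:ℤ),
        a i ≤ calM N l k i * c + calN N l k * a i ∧
        a i ≤ (calM N l k i / (1 - calN N l k)) * c := by
  
  have hl' : l ≠ 0 := hl.ne'
  have hkpos : ∀ i, 0 < k i := fun i => (hk i).1
  have hklt : ∀ i, k i < l := fun i => (hk i).2
  -- the unfolded recursion
  have key : ∀ n : ℕ, ∀ i : ℤ,
      a i ≤ (∑ m ∈ Finset.Ico (0:ℤ) (n:ℤ), (∏ r ∈ Finset.Ico (0:ℤ) m, k (i - r)) / l ^ m) * c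
        + ((∏ r ∈ Finset.Ico (0:ℤ) (n:ℤ), k (i - r)) / l ^ (n:ℤ)) * a (i - n) := by
    intro n
    induction n with
    | zero => intro i; simp
    | succ n ih =>
      intro i
      have hins : Finset.Ico (0:ℤ) ((n:ℤ)+1) = insert (n:ℤ) (Finset.Ico (0:ℤ) (n:ℤ)) := by
        ext x; simp only [Finset.mem_Ico, Finset.mem_insert]; omega
      have hnotmem : (n:ℤ) ∉ Finset.Ico (0:ℤ) (n:ℤ) := by simp
      have hPpos : 0 < ∏ r ∈ Finset.Ico (0:ℤ) (n:ℤ), k (i - r) :=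
        Finset.prod_pos fun r _ => hkpos _
      have hPl : 0 ≤ (∏ r ∈ Finset.Ico (0:ℤ) (n:ℤ), k (i - r)) / l ^ (n:ℤ) := by positivity
      have h2 : a (i - n) ≤ c + (k (i - n) / l) * a (i - ((n:ℤ)+1)) := by
        have := hrec (i - n)
        rwa [show i - (n:ℤ) - 1 = i - ((n:ℤ)+1) by ring] at this
      calc a i ≤ (∑ m ∈ Finset.Ico (0:ℤ) (n:ℤ), (∏ r ∈ Finset.Ico (0:ℤ) m, k (i - r)) / l ^ m) * c
            + ((∏ r ∈ Finset.Ico (0:ℤ) (n:ℤ), k (i - r)) / l ^ (n:ℤ)) * a (i - n) := ih i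
        _ ≤ (∑ m ∈ Finset.Ico (0:ℤ) (n:ℤ), (∏ r ∈ Finset.Ico (0:ℤ) m, k (i - r)) / l ^ m) * c
            + ((∏ r ∈ Finset.Ico (0:ℤ) (n:ℤ), k (i - r)) / l ^ (n:ℤ))
              * (c + (k (i - n) / l) * a (i - ((n:ℤ)+1))) := by
              gcongr
        _ = (∑ m ∈ Finset.Ico (0:ℤ) (↑(n+1):ℤ), (∏ r ∈ Finset.Ico (0:ℤ) m, k (i - r)) / l ^ m) * c
            + ((∏ r ∈ Finset.Ico (0:ℤ) (↑(n+1):ℤ), k (i - r)) / l ^ ((↑(n+1)):ℤ)) * a (i - ↑(n+1)) := by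
              push_cast
              rw [hins, Finset.sum_insert hnotmem, Finset.prod_insert hnotmem,
                zpow_add_one₀ hl']
              ring
  -- 𝒩 < 1
  have hcard : (Finset.Icc (1:ℤ) (N:ℤ)).card = N := by
    rw [Int.card_Icc]; omega
  have hNlt : calN N l k < 1 := by
    unfold calN
    rw [div_lt_one (pow_pos hl N)]
    calc (∏ i ∈ Finset.Icc (1:ℤ) (N:ℤ), k i) < ∏ _i ∈ Finset.Icc (1:ℤ) (N:ℤ), l := by
          apply Finset.prod_lt_prod_of_nonempty (fun i _ => hkpos i) (fun i _ => hklt i)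
          exact ⟨1, by simp only [Finset.mem_Icc]; omega⟩
      _ = l ^ N := by rw [Finset.prod_const, hcard]
  have h1N : 0 < 1 - calN N l k := by linarith
  refine ⟨hNlt, fun i hi => ?_⟩
  rw [Finset.mem_Icc] at hi
  obtain ⟨hi1, hiN⟩ := hi
  -- rewrite the key inequality at n = N
  have hkey := key N i
  have haiN : a (i - N) = a i := by
    have h := ha_per (i - N)
    rw [show i - (N:ℤ) + N = i by ring] at h
    exact h.symm
  have hPN : (∏ r ∈ Finset.Ico (0:ℤ) (N:ℤ), k (i - r)) = ∏ j ∈ Finset.Icc (1:ℤ) (N:ℤ), k j := by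
    rw [← windowProd N (by omega) k hk_per i]
    refine Finset.prod_nbij' (fun r => i - r) (fun j => i - j) ?_ ?_ ?_ ?_ ?_
    · intro r hr; simp only [Finset.mem_Ico] at hr; simp only [Finset.mem_Icc]; omega
    · intro j hj; simp only [Finset.mem_Icc] at hj; simp only [Finset.mem_Ico]; omega
    · intro r _; ring
    · intro j _; ring
    · intro r _; rfl
  rw [haiN, hPN, zpow_natCast] at hkey
  rw [show (∏ j ∈ Finset.Icc (1:ℤ) (N:ℤ), k j) / l ^ N = calN N l k from rfl] at hkey
  -- the partial sum is at most calM
  set S := ∑ m ∈ Finset.Ico (0:ℤ) (N:ℤ), (∏ r ∈ Finset.Ico (0:ℤ) m, k (i - r)) / l ^ m with hS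
  have hfirst : ∑ m ∈ Finset.Ico (0:ℤ) (1:ℤ), (∏ r ∈ Finset.Ico (0:ℤ) m, k (i - r)) / l ^ m = 1 := by
    rw [show Finset.Ico (0:ℤ) (1:ℤ) = {0} from rfl]
    simp
  have hterm1 : ∀ m : ℤ, 1 ≤ m →
      (∏ r ∈ Finset.Ico (0:ℤ) m, k (i - r)) / l ^ m
        = (∏ r ∈ Finset.Icc (0:ℤ) (m - 1), k (i - r)) / l ^ m := by
    intro m hm
    congr 1
    apply Finset.prod_congr _ fun _ _ => rfl
    ext x; simp only [Finset.mem_Ico, Finset.mem_Icc]; omega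
  have hterm2 : ∀ m : ℤ, i + 1 ≤ m →
      (∏ r ∈ Finset.Ico (0:ℤ) m, k (i - r))
        = (∏ r ∈ Finset.Icc (0:ℤ) (i - 1), k (i - r)) *
          (∏ s ∈ Finset.Icc (0:ℤ) (m - i - 1), k ((N:ℤ) - s)) := by
    intro m hm
    rw [prodIcoSplit 0 i m (by omega) (by omega)]
    congr 1
    · apply Finset.prod_congr _ fun _ _ => rfl
      ext x; simp only [Finset.mem_Ico, Finset.mem_Icc]; omega
    · refine Finset.prod_nbij' (fun r => r - i) (fun s => s + i) ?_ ?_ ?_ ?_ ?_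
      · intro r hr; simp only [Finset.mem_Ico] at hr; simp only [Finset.mem_Icc]; omega
      · intro s hs; simp only [Finset.mem_Icc] at hs; simp only [Finset.mem_Ico]; omega
      · intro r _; ring
      · intro s _; ring
      · intro r _
        rw [show (N:ℤ) - (r - i) = (i - r) + N by ring, hk_per]
  have hSM : S ≤ calM N l k i := by
    rw [hS, sumIcoSplit 0 1 (N:ℤ) (by omega) (by omega), hfirst]
    unfold calM
    rcases eq_or_lt_of_le hiN with hiN' | hiN'
    · -- i = N : third sum of calM is empty, first sum has an extra nonneg term at m = N
      have he : Finset.Icc (i + 1) ((N:ℤ) - 1) = ∅ := by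
        apply Finset.Icc_eq_empty; omega
      rw [he, Finset.sum_empty, add_zero]
      have hIccsplit : Finset.Icc (1:ℤ) i = insert i (Finset.Icc (1:ℤ) (i - 1)) := by
        ext x; simp only [Finset.mem_Icc, Finset.mem_insert]; omega
      rw [hIccsplit, Finset.sum_insert (by simp only [Finset.mem_Icc]; omega)]
      have heq : ∑ m ∈ Finset.Ico (1:ℤ) (N:ℤ), (∏ r ∈ Finset.Ico (0:ℤ) m, k (i - r)) / l ^ m
          = ∑ m ∈ Finset.Icc (1:ℤ) (i - 1), (∏ r ∈ Finset.Icc (0:ℤ) (m - 1), k (i - r)) / l ^ m := by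
        rw [show Finset.Ico (1:ℤ) (N:ℤ) = Finset.Icc (1:ℤ) (i - 1) by
          ext x; simp only [Finset.mem_Ico, Finset.mem_Icc]; omega]
        exact Finset.sum_congr rfl fun m hm => hterm1 m (by
          simp only [Finset.mem_Icc] at hm; omega)
      rw [heq]
      have hpos : 0 ≤ (∏ r ∈ Finset.Icc (0:ℤ) (i - 1), k (i - r)) / l ^ i := by
        have : (0:ℝ) < ∏ r ∈ Finset.Icc (0:ℤ) (i - 1), k (i - r) :=
          Finset.prod_pos fun r _ => hkpos _
        positivity
      linarith
    · -- i < N : exact equality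
      rw [sumIcoSplit 1 (i+1) (N:ℤ) (by omega) (by omega)]
      have heq1 : ∑ m ∈ Finset.Ico (1:ℤ) (i+1), (∏ r ∈ Finset.Ico (0:ℤ) m, k (i - r)) / l ^ m
          = ∑ m ∈ Finset.Icc (1:ℤ) i, (∏ r ∈ Finset.Icc (0:ℤ) (m - 1), k (i - r)) / l ^ m := by
        rw [show Finset.Ico (1:ℤ) (i+1) = Finset.Icc (1:ℤ) i by
          ext x; simp only [Finset.mem_Ico, Finset.mem_Icc]; omega]
        exact Finset.sum_congr rfl fun m hm => hterm1 m (by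
          simp only [Finset.mem_Icc] at hm; omega)
      have heq2 : ∑ m ∈ Finset.Ico (i+1) (N:ℤ), (∏ r ∈ Finset.Ico (0:ℤ) m, k (i - r)) / l ^ m
          = ∑ m ∈ Finset.Icc (i + 1) ((N:ℤ) - 1),
              ((∏ r ∈ Finset.Icc (0:ℤ) (i - 1), k (i - r)) *
                (∏ s ∈ Finset.Icc (0:ℤ) (m - i - 1), k ((N:ℤ) - s))) / l ^ m := by
        rw [show Finset.Ico (i+1) (N:ℤ) = Finset.Icc (i + 1) ((N:ℤ) - 1) by
          ext x; simp only [Finset.mem_Ico, Finset.mem_Icc]; omega]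
        refine Finset.sum_congr rfl fun m hm => ?_
        simp only [Finset.mem_Icc] at hm
        rw [hterm2 m (by omega)]
      rw [heq1, heq2]
      linarith
  -- conclude
  have hM1 : a i ≤ calM N l k i * c + calN N l k * a i := by
    have := mul_le_mul_of_nonneg_right hSM hc
    linarith
  refine ⟨hM1, ?_⟩
  rw [div_mul_eq_mul_div, le_div_iff₀ h1N]
  nlinarith [hM1]
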